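/- (Robba–Christol factorization) Let R be a complete nonarchimedean (not necessarily commutative) normed ring, a, b, c ∈ R nonzero, and U, V, W ⊆ R additive subgroups such that: U, V are complete, UV ⊆ W; the map f(u,v) = av + ub surjects U × V onto W; there is λ ∈ (0,1] with |f(u,v)| ≥ λ max{|a||v|, |b||u|} for all u ∈ U, v ∈ V; and ab − c ∈ W with |ab−c| < λ²|c|. Then there is a unique pair (x, y) ∈ U × V with c = (a+x)(b+y), |x| < λ|a|, |y| < λ|b|; moreover |x| ≤ λ⁻¹|ab−c||b|⁻¹ and |y| ≤ λ⁻¹|ab−c||a|⁻¹. -/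

import Mathlib

/-- **Robba–Christol factorization (Hensel's lemma in noncommutative rings).**
Let `R` be a (not necessarily commutative) ring equipped with a nonarchimedean norm
`ν : R → ℝ` (so `ν (x - y) ≤ max (ν x) (ν y)`, `ν (x*y) ≤ ν x * ν y`, `ν 0 = 0`),
whose associated metric is `dist x y = ν (x - y)`.  Suppose the nonzero elements
`a, b, c ∈ R` and additive subgroups `U, V, W ⊆ R` satisfy:
(a) `U, V` are complete under the norm, and `U·V ⊆ W`;
(b) the map `f(u,v) = a*v + u*b` surjects `U × V` onto `W`;
(c) there is `λ > 0` with `ν (a*v + u*b) ≥ λ * max (ν a * ν v) (ν b * ν u)`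
    for all `u ∈ U`, `v ∈ V`;
(d) `a*b - c ∈ W` and `ν (a*b - c) < λ² * ν c`.
Then there is a unique pair `(x, y) ∈ U × V` with
`c = (a+x)*(b+y)`, `ν x < λ * ν a`, `ν y < λ * ν b`; and moreover this pair satisfies
`ν x ≤ λ⁻¹ * ν (a*b - c) / ν b` and `ν y ≤ λ⁻¹ * ν (a*b - c) / ν a`. -/
theorem robba_christol_factorization
    {R : Type*} [Ring R] [MetricSpace R]
    (ν : R → ℝ)
    (hdist : ∀ x y : R, dist x y = ν (x - y))
    (hna : ∀ x y : R, ν (x - y) ≤ max (ν x) (ν y))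
    (hmul : ∀ x y : R, ν (x * y) ≤ ν x * ν y)
    (hzero : ν 0 = 0)
    (a b c : R) (ha : a ≠ 0) (hb : b ≠ 0) (hc : c ≠ 0)
    (U V W : AddSubgroup R)
    (hUcomplete : IsComplete (U : Set R)) (hVcomplete : IsComplete (V : Set R))
    (hUV : ∀ u ∈ U, ∀ v ∈ V, u * v ∈ W)
    (hsurj : ∀ w ∈ W, ∃ u ∈ U, ∃ v ∈ V, a * v + u * b = w)
    (lam : ℝ) (hlam : 0 < lam)
    (hbound : ∀ u ∈ U, ∀ v ∈ V,
      lam * max (ν a * ν v) (ν b * ν u) ≤ ν (a * v + u * b))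
    (habc : a * b - c ∈ W)
    (hsmall : ν (a * b - c) < lam ^ 2 * ν c) :
    ∃ x y : R,
      (x ∈ U ∧ y ∈ V ∧ c = (a + x) * (b + y) ∧ ν x < lam * ν a ∧ ν y < lam * ν b) ∧
      (ν x ≤ lam⁻¹ * ν (a * b - c) / ν b ∧ ν y ≤ lam⁻¹ * ν (a * b - c) / ν a) ∧
      (∀ x' y' : R,
        (x' ∈ U ∧ y' ∈ V ∧ c = (a + x') * (b + y') ∧ ν x' < lam * ν a ∧ ν y' < lam * ν b) →
        x' = x ∧ y' = y) := by
  classical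
  -- basic facts about ν
  have hνnonneg : ∀ z : R, 0 ≤ ν z := by
    intro z; have h := dist_nonneg (x := z) (y := 0); rwa [hdist, sub_zero] at h
  have hνeq0 : ∀ z : R, ν z = 0 ↔ z = 0 := by
    intro z; have h := dist_eq_zero (x := z) (y := 0); rwa [hdist, sub_zero] at h
  have hνpos : ∀ z : R, z ≠ 0 → 0 < ν z := by
    intro z hz
    rcases lt_or_eq_of_le (hνnonneg z) with h | h
    · exact h
    · exact absurd ((hνeq0 z).mp h.symm) hz
  have hνneg : ∀ z : R, ν (-z) = ν z := by
    intro z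
    have h1 := hna 0 z
    rw [zero_sub, hzero, max_eq_right (hνnonneg z)] at h1
    have h2 := hna 0 (-z)
    rw [zero_sub, neg_neg, hzero, max_eq_right (hνnonneg (-z))] at h2
    exact le_antisymm h1 h2
  have hνadd : ∀ p q : R, ν (p + q) ≤ max (ν p) (ν q) := by
    intro p q
    have h := hna p (-q)
    rwa [sub_neg_eq_add, hνneg q] at h
  have hνadd' : ∀ p q : R, ν (p + q) ≤ ν p + ν q := fun p q =>
    (hνadd p q).trans (max_le (le_add_of_nonneg_right (hνnonneg q))
      (le_add_of_nonneg_left (hνnonneg p)))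
  have hA : 0 < ν a := hνpos a ha
  have hB : 0 < ν b := hνpos b hb
  have hC : 0 < ν c := hνpos c hc
  have hεnonneg : 0 ≤ ν (a * b - c) := hνnonneg _
  -- convenient forms of hbound
  have hbu : ∀ u ∈ U, ∀ v ∈ V, lam * (ν b * ν u) ≤ ν (a * v + u * b) := fun u hu v hv =>
    le_trans (mul_le_mul_of_nonneg_left (le_max_right _ _) hlam.le) (hbound u hu v hv)
  have hbv : ∀ u ∈ U, ∀ v ∈ V, lam * (ν a * ν v) ≤ ν (a * v + u * b) := fun u hu v hv =>
    le_trans (mul_le_mul_of_nonneg_left (le_max_left _ _) hlam.le) (hbound u hu v hv)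
  -- uniqueness (needs no completeness and no lam ≤ 1)
  have huniq : ∀ x y x' y' : R, x ∈ U → y ∈ V → x' ∈ U → y' ∈ V →
      c = (a + x) * (b + y) → c = (a + x') * (b + y') →
      ν x' < lam * ν a → ν y < lam * ν b → x' = x ∧ y' = y := by
    intro x y x' y' hxU hyV hx'U hy'V hcxy hcx'y' hx' hy
    have huU : x' - x ∈ U := sub_mem hx'U hxU
    have hvV : y' - y ∈ V := sub_mem hy'V hyV
    have hkey : a * (y' - y) + (x' - x) * b = -(x' * (y' - y) + (x' - x) * y) := by
      have hid : a * (y' - y) + (x' - x) * b + (x' * (y' - y) + (x' - x) * y)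
          = (a + x') * (b + y') - (a + x) * (b + y) := by noncomm_ring
      rw [← hcx'y', ← hcxy, sub_self] at hid
      exact eq_neg_of_add_eq_zero_left hid
    have hDle : lam * max (ν a * ν (y' - y)) (ν b * ν (x' - x))
        ≤ ν (a * (y' - y) + (x' - x) * b) := hbound _ huU _ hvV
    have hle2 : ν (a * (y' - y) + (x' - x) * b)
        ≤ max (ν x' * ν (y' - y)) (ν (x' - x) * ν y) := by
      rw [hkey, hνneg]
      exact (hνadd _ _).trans (max_le_max (hmul _ _) (hmul _ _))
    have hD0 : max (ν a * ν (y' - y)) (ν b * ν (x' - x)) ≤ 0 := by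
      by_contra hpos
      push_neg at hpos
      set D := max (ν a * ν (y' - y)) (ν b * ν (x' - x)) with hD
      have t1 : ν x' * ν (y' - y) < lam * D := by
        rcases (hνnonneg (y' - y)).eq_or_lt with h | h
        · rw [← h, mul_zero]; exact mul_pos hlam hpos
        · calc ν x' * ν (y' - y) < lam * ν a * ν (y' - y) := by
                exact mul_lt_mul_of_pos_right hx' h
            _ = lam * (ν a * ν (y' - y)) := by ring
            _ ≤ lam * D := mul_le_mul_of_nonneg_left (le_max_left _ _) hlam.le
      have t2 : ν (x' - x) * ν y < lam * D := by
        rcases (hνnonneg (x' - x)).eq_or_lt with h | h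
        · rw [← h, zero_mul]; exact mul_pos hlam hpos
        · calc ν (x' - x) * ν y < ν (x' - x) * (lam * ν b) := by
                exact mul_lt_mul_of_pos_left hy h
            _ = lam * (ν b * ν (x' - x)) := by ring
            _ ≤ lam * D := mul_le_mul_of_nonneg_left (le_max_right _ _) hlam.le
      exact lt_irrefl _ (lt_of_le_of_lt (hDle.trans hle2) (max_lt t1 t2))
    have hy0 : y' - y = 0 := by
      have h1 : ν a * ν (y' - y) ≤ 0 := le_trans (le_max_left _ _) hD0
      have h2 : ν (y' - y) = 0 := le_antisymm (nonpos_of_mul_nonpos_right ?_ hA) (hνnonneg _)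
      · exact (hνeq0 _).mp h2
      · nlinarith [hνnonneg (y' - y)]
    have hx0 : x' - x = 0 := by
      have h1 : ν b * ν (x' - x) ≤ 0 := le_trans (le_max_right _ _) hD0
      have h2 : ν (x' - x) = 0 := le_antisymm (by nlinarith [hνnonneg (x' - x)]) (hνnonneg _)
      exact (hνeq0 _).mp h2
    exact ⟨sub_eq_zero.mp hx0, sub_eq_zero.mp hy0⟩
  by_cases hl1 : lam ≤ 1
  · -- main case : lam ≤ 1
    set ε := ν (a * b - c) with hεdef
    have hνswap : ∀ p q : R, ν (p - q) = ν (q - p) := by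
      intro p q; rw [← hνneg (q - p), neg_sub]
    have hεC : ε < ν c := by nlinarith [mul_le_mul_of_nonneg_left hl1 hlam.le]
    have hCAB : ν c ≤ ν a * ν b := by
      have h2 := hna (a * b) (a * b - c)
      rw [sub_sub_cancel] at h2
      rcases max_cases (ν (a * b)) (ν (a * b - c)) with ⟨he, -⟩ | ⟨he, -⟩
      · rw [he] at h2; exact h2.trans (hmul a b)
      · rw [he] at h2; exact absurd (h2.trans_lt hεC) (lt_irrefl _)
    have hεAB : ε < lam ^ 2 * (ν a * ν b) := by nlinarith [sq_nonneg lam]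
    have hABpos : 0 < lam ^ 2 * (ν a * ν b) := mul_pos (pow_pos hlam 2) (mul_pos hA hB)
    -- the iteration step via choice
    have key : ∀ x : R, x ∈ U → ∀ y : R, y ∈ V →
        ∃ x', x' ∈ U ∧ ∃ y', y' ∈ V ∧ a * y' + x' * b = -(a * b - c) - x * y := by
      intro x hx y hy
      have hw : -(a * b - c) - x * y ∈ W := sub_mem (neg_mem habc) (hUV x hx y hy)
      obtain ⟨u, hu, v, hv, heq⟩ := hsurj _ hw
      exact ⟨u, hu, v, hv, heq⟩
    choose! g1 hg1 g2 hg2 hgeq using key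
    set s : ℕ → R × R := fun n =>
      Nat.rec ((0 : R), (0 : R)) (fun _ p => (g1 p.1 p.2, g2 p.1 p.2)) n with hs
    have hs01 : (s 0).1 = 0 := rfl
    have hs02 : (s 0).2 = 0 := rfl
    have hsucc : ∀ n, s (n + 1) = (g1 (s n).1 (s n).2, g2 (s n).1 (s n).2) := fun n => rfl
    have hmem : ∀ n, (s n).1 ∈ U ∧ (s n).2 ∈ V := by
      intro n
      induction n with
      | zero =>
        constructor
        · rw [hs01]; exact zero_mem U
        · rw [hs02]; exact zero_mem V
      | succ n ih => rw [hsucc]; exact ⟨hg1 _ ih.1 _ ih.2, hg2 _ ih.1 _ ih.2⟩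
    have hrec : ∀ n, a * (s (n + 1)).2 + (s (n + 1)).1 * b
        = -(a * b - c) - (s n).1 * (s n).2 := by
      intro n; rw [hsucc]; exact hgeq _ (hmem n).1 _ (hmem n).2
    -- uniform norm bounds on the sequence
    have hninv : ∀ n, lam * (ν b * ν (s n).1) ≤ ε ∧ lam * (ν a * ν (s n).2) ≤ ε := by
      intro n
      induction n with
      | zero =>
        rw [hs01, hs02, hzero]
        simp only [mul_zero]
        exact ⟨hεnonneg, hεnonneg⟩
      | succ n ih =>
        have hprod : ν (s n).1 * ν (s n).2 ≤ ε := by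
          have hp : (lam * (ν b * ν (s n).1)) * (lam * (ν a * ν (s n).2)) ≤ ε * ε :=
            mul_le_mul ih.1 ih.2
              (mul_nonneg hlam.le (mul_nonneg hA.le (hνnonneg _))) hεnonneg
          nlinarith [hABpos, hεnonneg, hεAB, hνnonneg (s n).1, hνnonneg (s n).2]
        have hw : ν (-(a * b - c) - (s n).1 * (s n).2) ≤ ε := by
          refine (hna _ _).trans (max_le (le_of_eq (hνneg _)) ?_)
          exact (hmul _ _).trans hprod
        constructor
        · have h := hbu _ (hmem (n + 1)).1 _ (hmem (n + 1)).2
          rw [hrec n] at h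
          exact h.trans hw
        · have h := hbv _ (hmem (n + 1)).1 _ (hmem (n + 1)).2
          rw [hrec n] at h
          exact h.trans hw
    -- geometric decay of differences
    set q := ε / (lam ^ 2 * (ν a * ν b)) with hqdef
    have hq0 : 0 ≤ q := div_nonneg hεnonneg hABpos.le
    have hq1 : q < 1 := (div_lt_one hABpos).mpr hεAB
    have hqε : lam ^ 2 * (ν a * ν b) * q = ε := by
      rw [hqdef, mul_div_cancel₀ _ hABpos.ne']
    have hδ : ∀ n, lam * (ν b * ν ((s (n + 1)).1 - (s n).1)) ≤ ε * q ^ n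
        ∧ lam * (ν a * ν ((s (n + 1)).2 - (s n).2)) ≤ ε * q ^ n := by
      intro n
      induction n with
      | zero =>
        simp only [zero_add, pow_zero, mul_one]
        have h0 : a * (s 1).2 + (s 1).1 * b = -(a * b - c) := by
          have h := hrec 0
          rw [hs01, zero_mul, sub_zero] at h
          exact h
        rw [hs01, hs02, sub_zero, sub_zero]
        constructor
        · have h := hbu _ (hmem 1).1 _ (hmem 1).2
          rw [h0, hνneg] at h
          exact h
        · have h := hbv _ (hmem 1).1 _ (hmem 1).2
          rw [h0, hνneg] at h
          exact h
      | succ n ih =>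
        have hdiff : a * ((s (n + 1 + 1)).2 - (s (n + 1)).2)
              + ((s (n + 1 + 1)).1 - (s (n + 1)).1) * b
            = -((s (n + 1)).1 * ((s (n + 1)).2 - (s n).2)
              + ((s (n + 1)).1 - (s n).1) * (s n).2) := by
          have h1 := hrec (n + 1)
          have h2 := hrec n
          have hexp : a * ((s (n + 1 + 1)).2 - (s (n + 1)).2)
              + ((s (n + 1 + 1)).1 - (s (n + 1)).1) * b
              = (a * (s (n + 1 + 1)).2 + (s (n + 1 + 1)).1 * b)
                - (a * (s (n + 1)).2 + (s (n + 1)).1 * b) := by noncomm_ring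
          rw [hexp, h1, h2]
          noncomm_ring
        have hrhs : ν (a * ((s (n + 1 + 1)).2 - (s (n + 1)).2)
              + ((s (n + 1 + 1)).1 - (s (n + 1)).1) * b)
            ≤ max (ν (s (n + 1)).1 * ν ((s (n + 1)).2 - (s n).2))
                  (ν ((s (n + 1)).1 - (s n).1) * ν (s n).2) := by
          rw [hdiff, hνneg]
          exact (hνadd _ _).trans (max_le_max (hmul _ _) (hmul _ _))
        have hABq : lam ^ 2 * (ν a * ν b) * (ε * q ^ (n + 1)) = ε * (ε * q ^ n) := by
          rw [pow_succ]
          calc lam ^ 2 * (ν a * ν b) * (ε * (q ^ n * q))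
              = lam ^ 2 * (ν a * ν b) * q * (ε * q ^ n) := by ring
            _ = ε * (ε * q ^ n) := by rw [hqε]
        have hp1 : ν (s (n + 1)).1 * ν ((s (n + 1)).2 - (s n).2) ≤ ε * q ^ (n + 1) := by
          have hm : (lam * (ν b * ν (s (n + 1)).1))
                * (lam * (ν a * ν ((s (n + 1)).2 - (s n).2))) ≤ ε * (ε * q ^ n) :=
            mul_le_mul (hninv (n + 1)).1 ih.2
              (mul_nonneg hlam.le (mul_nonneg hA.le (hνnonneg _))) hεnonneg
          refine le_of_mul_le_mul_left ?_ hABpos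
          calc lam ^ 2 * (ν a * ν b) * (ν (s (n + 1)).1 * ν ((s (n + 1)).2 - (s n).2))
              = (lam * (ν b * ν (s (n + 1)).1))
                * (lam * (ν a * ν ((s (n + 1)).2 - (s n).2))) := by ring
            _ ≤ ε * (ε * q ^ n) := hm
            _ = lam ^ 2 * (ν a * ν b) * (ε * q ^ (n + 1)) := hABq.symm
        have hp2 : ν ((s (n + 1)).1 - (s n).1) * ν (s n).2 ≤ ε * q ^ (n + 1) := by
          have hm : (lam * (ν b * ν ((s (n + 1)).1 - (s n).1)))
                * (lam * (ν a * ν (s n).2)) ≤ ε * q ^ n * ε :=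
            mul_le_mul ih.1 (hninv n).2
              (mul_nonneg hlam.le (mul_nonneg hA.le (hνnonneg _)))
              (mul_nonneg hεnonneg (pow_nonneg hq0 n))
          refine le_of_mul_le_mul_left ?_ hABpos
          calc lam ^ 2 * (ν a * ν b) * (ν ((s (n + 1)).1 - (s n).1) * ν (s n).2)
              = (lam * (ν b * ν ((s (n + 1)).1 - (s n).1))) * (lam * (ν a * ν (s n).2)) := by
                ring
            _ ≤ ε * q ^ n * ε := hm
            _ = lam ^ 2 * (ν a * ν b) * (ε * q ^ (n + 1)) := by rw [hABq]; ring
        have hfin := hrhs.trans (max_le hp1 hp2)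
        have hmem2 := hmem (n + 1 + 1)
        have hmem1 := hmem (n + 1)
        constructor
        · exact (hbu _ (sub_mem hmem2.1 hmem1.1) _ (sub_mem hmem2.2 hmem1.2)).trans hfin
        · exact (hbv _ (sub_mem hmem2.1 hmem1.1) _ (sub_mem hmem2.2 hmem1.2)).trans hfin
    -- Cauchy estimates
    have hcaub : ∀ N k, lam * (ν b * ν ((s (N + k)).1 - (s N).1)) ≤ ε * q ^ N
        ∧ lam * (ν a * ν ((s (N + k)).2 - (s N).2)) ≤ ε * q ^ N := by
      intro N k
      induction k with
      | zero =>
        simp only [Nat.add_zero, sub_self, hzero, mul_zero]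
        exact ⟨mul_nonneg hεnonneg (pow_nonneg hq0 N), mul_nonneg hεnonneg (pow_nonneg hq0 N)⟩
      | succ k ih =>
        have hqk : ε * q ^ (N + k) ≤ ε * q ^ N :=
          mul_le_mul_of_nonneg_left
            (pow_le_pow_of_le_one hq0 hq1.le (Nat.le_add_right N k)) hεnonneg
        constructor
        · show lam * (ν b * ν ((s (N + k + 1)).1 - (s N).1)) ≤ ε * q ^ N
          have hsplit : ν ((s (N + k + 1)).1 - (s N).1)
              ≤ max (ν ((s (N + k + 1)).1 - (s (N + k)).1)) (ν ((s (N + k)).1 - (s N).1)) := by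
            have h := hνadd ((s (N + k + 1)).1 - (s (N + k)).1) ((s (N + k)).1 - (s N).1)
            rwa [sub_add_sub_cancel] at h
          calc lam * (ν b * ν ((s (N + k + 1)).1 - (s N).1))
              ≤ lam * (ν b * max (ν ((s (N + k + 1)).1 - (s (N + k)).1))
                  (ν ((s (N + k)).1 - (s N).1))) :=
                mul_le_mul_of_nonneg_left (mul_le_mul_of_nonneg_left hsplit hB.le) hlam.le
            _ = max (lam * (ν b * ν ((s (N + k + 1)).1 - (s (N + k)).1)))
                  (lam * (ν b * ν ((s (N + k)).1 - (s N).1))) := by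
                rw [mul_max_of_nonneg _ _ hB.le, mul_max_of_nonneg _ _ hlam.le]
            _ ≤ ε * q ^ N := max_le ((hδ (N + k)).1.trans hqk) ih.1
        · show lam * (ν a * ν ((s (N + k + 1)).2 - (s N).2)) ≤ ε * q ^ N
          have hsplit : ν ((s (N + k + 1)).2 - (s N).2)
              ≤ max (ν ((s (N + k + 1)).2 - (s (N + k)).2)) (ν ((s (N + k)).2 - (s N).2)) := by
            have h := hνadd ((s (N + k + 1)).2 - (s (N + k)).2) ((s (N + k)).2 - (s N).2)
            rwa [sub_add_sub_cancel] at h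
          calc lam * (ν a * ν ((s (N + k + 1)).2 - (s N).2))
              ≤ lam * (ν a * max (ν ((s (N + k + 1)).2 - (s (N + k)).2))
                  (ν ((s (N + k)).2 - (s N).2))) :=
                mul_le_mul_of_nonneg_left (mul_le_mul_of_nonneg_left hsplit hA.le) hlam.le
            _ = max (lam * (ν a * ν ((s (N + k + 1)).2 - (s (N + k)).2)))
                  (lam * (ν a * ν ((s (N + k)).2 - (s N).2))) := by
                rw [mul_max_of_nonneg _ _ hA.le, mul_max_of_nonneg _ _ hlam.le]
            _ ≤ ε * q ^ N := max_le ((hδ (N + k)).2.trans hqk) ih.2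
    have hcaubx : ∀ N k, ν ((s (N + k)).1 - (s N).1) ≤ ε * q ^ N / (lam * ν b) := by
      intro N k
      rw [le_div_iff₀ (mul_pos hlam hB)]
      calc ν ((s (N + k)).1 - (s N).1) * (lam * ν b)
          = lam * (ν b * ν ((s (N + k)).1 - (s N).1)) := by ring
        _ ≤ ε * q ^ N := (hcaub N k).1
    have hcauby : ∀ N k, ν ((s (N + k)).2 - (s N).2) ≤ ε * q ^ N / (lam * ν a) := by
      intro N k
      rw [le_div_iff₀ (mul_pos hlam hA)]
      calc ν ((s (N + k)).2 - (s N).2) * (lam * ν a)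
          = lam * (ν a * ν ((s (N + k)).2 - (s N).2)) := by ring
        _ ≤ ε * q ^ N := (hcaub N k).2
    have hqlim : Filter.Tendsto (fun N : ℕ => q ^ N) Filter.atTop (nhds 0) :=
      tendsto_pow_atTop_nhds_zero_of_lt_one hq0 hq1
    have hcauchyX : CauchySeq (fun n => (s n).1) := by
      apply cauchySeq_of_le_tendsto_0 (fun N => ε * q ^ N / (lam * ν b))
      · intro n m N hNn hNm
        obtain ⟨k1, rfl⟩ := Nat.exists_eq_add_of_le hNn
        obtain ⟨k2, rfl⟩ := Nat.exists_eq_add_of_le hNm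
        rw [hdist]
        have hsplit : ν ((s (N + k1)).1 - (s (N + k2)).1)
            ≤ max (ν ((s (N + k1)).1 - (s N).1)) (ν ((s (N + k2)).1 - (s N).1)) := by
          have h := hna ((s (N + k1)).1 - (s N).1) ((s (N + k2)).1 - (s N).1)
          rwa [sub_sub_sub_cancel_right] at h
        exact hsplit.trans (max_le (hcaubx N k1) (hcaubx N k2))
      · have := (hqlim.const_mul ε).div_const (lam * ν b)
        simpa using this
    have hcauchyY : CauchySeq (fun n => (s n).2) := by
      apply cauchySeq_of_le_tendsto_0 (fun N => ε * q ^ N / (lam * ν a))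
      · intro n m N hNn hNm
        obtain ⟨k1, rfl⟩ := Nat.exists_eq_add_of_le hNn
        obtain ⟨k2, rfl⟩ := Nat.exists_eq_add_of_le hNm
        rw [hdist]
        have hsplit : ν ((s (N + k1)).2 - (s (N + k2)).2)
            ≤ max (ν ((s (N + k1)).2 - (s N).2)) (ν ((s (N + k2)).2 - (s N).2)) := by
          have h := hna ((s (N + k1)).2 - (s N).2) ((s (N + k2)).2 - (s N).2)
          rwa [sub_sub_sub_cancel_right] at h
        exact hsplit.trans (max_le (hcauby N k1) (hcauby N k2))
      · have := (hqlim.const_mul ε).div_const (lam * ν a)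
        simpa using this
    obtain ⟨x, hxU, hxt⟩ :=
      cauchySeq_tendsto_of_isComplete hUcomplete (fun n => (hmem n).1) hcauchyX
    obtain ⟨y, hyV, hyt⟩ :=
      cauchySeq_tendsto_of_isComplete hVcomplete (fun n => (hmem n).2) hcauchyY
    have hxt0 : Filter.Tendsto (fun n => ν ((s n).1 - x)) Filter.atTop (nhds 0) := by
      have := tendsto_iff_dist_tendsto_zero.mp hxt
      simpa only [hdist] using this
    have hyt0 : Filter.Tendsto (fun n => ν ((s n).2 - y)) Filter.atTop (nhds 0) := by
      have := tendsto_iff_dist_tendsto_zero.mp hyt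
      simpa only [hdist] using this
    -- norms pass to the limit
    have hlim_le : ∀ (z : R) (u : ℕ → R) (M : ℝ), 0 ≤ M →
        Filter.Tendsto (fun n => ν (u n - z)) Filter.atTop (nhds 0) →
        (∀ n, ν (u n) ≤ M) → ν z ≤ M := by
      intro z u M hM hu hub
      have h1 : ∀ n, ν z ≤ ν (u n - z) + M := by
        intro n
        have h := hna (u n) (u n - z)
        rw [sub_sub_cancel] at h
        exact h.trans (max_le ((hub n).trans (le_add_of_nonneg_left (hνnonneg _)))
          (le_add_of_nonneg_right hM))
      have h2 := hu.add_const M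
      rw [zero_add] at h2
      exact ge_of_tendsto' h2 h1
    have hxb : ν x ≤ ε / (lam * ν b) := by
      refine hlim_le x (fun n => (s n).1) _
        (div_nonneg hεnonneg (mul_pos hlam hB).le) hxt0 ?_
      intro n
      rw [le_div_iff₀ (mul_pos hlam hB)]
      calc ν (s n).1 * (lam * ν b) = lam * (ν b * ν (s n).1) := by ring
        _ ≤ ε := (hninv n).1
    have hyb : ν y ≤ ε / (lam * ν a) := by
      refine hlim_le y (fun n => (s n).2) _
        (div_nonneg hεnonneg (mul_pos hlam hA).le) hyt0 ?_
      intro n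
      rw [le_div_iff₀ (mul_pos hlam hA)]
      calc ν (s n).2 * (lam * ν a) = lam * (ν a * ν (s n).2) := by ring
        _ ≤ ε := (hninv n).2
    have hxlt : ν x < lam * ν a := by
      refine lt_of_le_of_lt hxb ?_
      rw [div_lt_iff₀ (mul_pos hlam hB)]
      calc ε < lam ^ 2 * (ν a * ν b) := hεAB
        _ = lam * ν a * (lam * ν b) := by ring
    have hylt : ν y < lam * ν b := by
      refine lt_of_le_of_lt hyb ?_
      rw [div_lt_iff₀ (mul_pos hlam hA)]
      calc ε < lam ^ 2 * (ν a * ν b) := hεAB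
        _ = lam * ν b * (lam * ν a) := by ring
    have hxle : ν x ≤ lam⁻¹ * ε / ν b := by
      rw [inv_mul_eq_div, div_div]
      exact hxb
    have hyle : ν y ≤ lam⁻¹ * ε / ν a := by
      rw [inv_mul_eq_div, div_div]
      exact hyb
    -- the limit satisfies the equation
    have hybn : ∀ n, ν (s n).2 ≤ ε / (lam * ν a) := by
      intro n
      rw [le_div_iff₀ (mul_pos hlam hA)]
      calc ν (s n).2 * (lam * ν a) = lam * (ν a * ν (s n).2) := by ring
        _ ≤ ε := (hninv n).2
    have hEn : ∀ n, a * y + x * b + x * y + (a * b - c)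
        = a * (y - (s (n + 1)).2) + (x - (s (n + 1)).1) * b
          + (x * (y - (s n).2) + (x - (s n).1) * (s n).2) := by
      intro n
      have h0 : a * (s (n + 1)).2 + (s (n + 1)).1 * b + (s n).1 * (s n).2 + (a * b - c) = 0 := by
        rw [hrec n]; noncomm_ring
      calc a * y + x * b + x * y + (a * b - c)
          = a * y + x * b + x * y + (a * b - c)
            - (a * (s (n + 1)).2 + (s (n + 1)).1 * b + (s n).1 * (s n).2 + (a * b - c)) := by
            rw [h0, sub_zero]
        _ = a * (y - (s (n + 1)).2) + (x - (s (n + 1)).1) * b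
            + (x * (y - (s n).2) + (x - (s n).1) * (s n).2) := by noncomm_ring
    have hEbound : ∀ n, ν (a * y + x * b + x * y + (a * b - c))
        ≤ ν a * ν ((s (n + 1)).2 - y) + ν ((s (n + 1)).1 - x) * ν b
          + (ν x * ν ((s n).2 - y) + ν ((s n).1 - x) * (ε / (lam * ν a))) := by
      intro n
      rw [hEn n]
      refine (hνadd' _ _).trans (add_le_add ((hνadd' _ _).trans (add_le_add ?_ ?_))
        ((hνadd' _ _).trans (add_le_add ?_ ?_)))
      · calc ν (a * (y - (s (n + 1)).2)) ≤ ν a * ν (y - (s (n + 1)).2) := hmul _ _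
          _ = ν a * ν ((s (n + 1)).2 - y) := by rw [hνswap]
      · calc ν ((x - (s (n + 1)).1) * b) ≤ ν (x - (s (n + 1)).1) * ν b := hmul _ _
          _ = ν ((s (n + 1)).1 - x) * ν b := by rw [hνswap]
      · calc ν (x * (y - (s n).2)) ≤ ν x * ν (y - (s n).2) := hmul _ _
          _ = ν x * ν ((s n).2 - y) := by rw [hνswap]
      · calc ν ((x - (s n).1) * (s n).2) ≤ ν (x - (s n).1) * ν (s n).2 := hmul _ _
          _ ≤ ν (x - (s n).1) * (ε / (lam * ν a)) :=
            mul_le_mul_of_nonneg_left (hybn n) (hνnonneg _)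
          _ = ν ((s n).1 - x) * (ε / (lam * ν a)) := by rw [hνswap]
    have hshift_r : Filter.Tendsto (fun n => ν ((s (n + 1)).1 - x)) Filter.atTop (nhds 0) := by
      have := hxt0.comp (Filter.tendsto_add_atTop_nat 1)
      exact this
    have hshift_t : Filter.Tendsto (fun n => ν ((s (n + 1)).2 - y)) Filter.atTop (nhds 0) := by
      have := hyt0.comp (Filter.tendsto_add_atTop_nat 1)
      exact this
    have hlimE : Filter.Tendsto (fun n => ν a * ν ((s (n + 1)).2 - y)
        + ν ((s (n + 1)).1 - x) * ν b
        + (ν x * ν ((s n).2 - y) + ν ((s n).1 - x) * (ε / (lam * ν a))))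
        Filter.atTop (nhds 0) := by
      have h1 := hshift_t.const_mul (ν a)
      have h2 := hshift_r.mul_const (ν b)
      have h3 := hyt0.const_mul (ν x)
      have h4 := hxt0.mul_const (ε / (lam * ν a))
      have := (h1.add h2).add (h3.add h4)
      simpa using this
    have hE0 : ν (a * y + x * b + x * y + (a * b - c)) ≤ 0 := ge_of_tendsto' hlimE hEbound
    have hEeq : a * y + x * b + x * y + (a * b - c) = 0 :=
      (hνeq0 _).mp (le_antisymm hE0 (hνnonneg _))
    have hceq : c = (a + x) * (b + y) := by
      have h : (a + x) * (b + y) - c = a * y + x * b + x * y + (a * b - c) := by noncomm_ring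
      rw [hEeq] at h
      exact (sub_eq_zero.mp h).symm
    refine ⟨x, y, ⟨hxU, hyV, hceq, hxlt, hylt⟩, ⟨hxle, hyle⟩, ?_⟩
    rintro x' y' ⟨hx'U, hy'V, hc', hx'lt, hy'lt⟩
    exact huniq x y x' y' hxU hyV hx'U hy'V hceq hc' hx'lt hylt
  · -- degenerate case : lam > 1 forces U = V = 0
    push_neg at hl1
    have hV0 : ∀ v ∈ V, v = 0 := by
      intro v hv
      have h1 := hbv 0 (zero_mem U) v hv
      rw [zero_mul, add_zero] at h1
      have h2 := (h1.trans (hmul a v))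
      have : ν v = 0 := by
        by_contra hne
        have hv' : 0 < ν v := (hνnonneg v).lt_of_ne (Ne.symm hne)
        nlinarith [mul_pos hA hv']
      exact (hνeq0 v).mp this
    have hU0 : ∀ u ∈ U, u = 0 := by
      intro u hu
      have h1 := hbu u hu 0 (zero_mem V)
      rw [mul_zero, zero_add] at h1
      have h2 := (h1.trans (hmul u b))
      have : ν u = 0 := by
        by_contra hne
        have hu' : 0 < ν u := (hνnonneg u).lt_of_ne (Ne.symm hne)
        nlinarith [mul_pos hB hu']
      exact (hνeq0 u).mp this
    have habc0 : a * b - c = 0 := by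
      obtain ⟨u, hu, v, hv, heq⟩ := hsurj _ habc
      rw [hU0 u hu, hV0 v hv] at heq
      simpa using heq.symm
    have hceq : c = (a + 0) * (b + 0) := by
      rw [add_zero, add_zero]
      exact (sub_eq_zero.mp habc0).symm
    refine ⟨0, 0, ⟨zero_mem U, zero_mem V, hceq, ?_, ?_⟩, ⟨?_, ?_⟩, ?_⟩
    · rw [hzero]; exact mul_pos hlam hA
    · rw [hzero]; exact mul_pos hlam hB
    · rw [hzero]
      exact div_nonneg (mul_nonneg (inv_nonneg.mpr hlam.le) hεnonneg) hB.le
    · rw [hzero]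
      exact div_nonneg (mul_nonneg (inv_nonneg.mpr hlam.le) hεnonneg) hA.le
    · rintro x' y' ⟨hx'U, hy'V, -, -, -⟩
      exact ⟨hU0 x' hx'U, hV0 y' hy'V⟩
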